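/- Let 0 < q < 1, let a > 0 be an integer and m > 1 an integer, and let \theta be real with \theta' := q\theta - 1. Then (\theta q^{2m})/([m]_q^a([m]_q - \theta q^m)) - q^m/([m]_q^{a-1}([m]_q - \theta q^m)) = (\theta' q^{2m-a})/([m-1]_q^a([m]_q - \theta q^m)) - q^{m-a+1}/([m-1]_q^{a-1}([m]_q - \theta q^m)) + q^{m-a+1}/[m-1]_q^a - q^m/[m]_q^a, provided [m]_q - \theta q^m \ne 0. -/

import Mathlib

noncomputable def qnum (q : ℝ) (k : ℕ) : ℝ := (1 - q ^ k) / (1 - q)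

theorem q_partial_fraction_identity (q θ : ℝ) (hq0 : 0 < q) (hq1 : q < 1)
    (a m : ℕ) (ha : 0 < a) (hm : 1 < m)
    (hden : qnum q m - θ * q ^ (m : ℤ) ≠ 0) :
    θ * q ^ (2 * (m : ℤ)) / ((qnum q m) ^ a * (qnum q m - θ * q ^ (m : ℤ)))
      - q ^ (m : ℤ) / ((qnum q m) ^ (a - 1) * (qnum q m - θ * q ^ (m : ℤ)))
    = (q * θ - 1) * q ^ (2 * (m : ℤ) - (a : ℤ)) /
        ((qnum q (m - 1)) ^ a * (qnum q m - θ * q ^ (m : ℤ)))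
      - q ^ ((m : ℤ) - (a : ℤ) + 1) /
          ((qnum q (m - 1)) ^ (a - 1) * (qnum q m - θ * q ^ (m : ℤ)))
      + q ^ ((m : ℤ) - (a : ℤ) + 1) / (qnum q (m - 1)) ^ a
      - q ^ (m : ℤ) / (qnum q m) ^ a := by
  have hq : q ≠ 0 := ne_of_gt hq0
  have hq1' : (1 : ℝ) - q ≠ 0 := by nlinarith
  obtain ⟨b, rfl⟩ : ∃ b, a = b + 1 := ⟨a - 1, (Nat.succ_pred_eq_of_pos ha).symm⟩
  have hqm1 : q ^ m < 1 := by
    calc q ^ m ≤ q ^ 1 := pow_le_pow_of_le_one (le_of_lt hq0) (le_of_lt hq1) (by omega)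
    _ = q := pow_one q
    _ < 1 := hq1
  have hA : qnum q m ≠ 0 := by
    unfold qnum
    apply div_ne_zero _ hq1'
    nlinarith
  have hB : qnum q (m - 1) ≠ 0 := by
    have : q ^ (m - 1) < 1 := by
      calc q ^ (m-1) ≤ q ^ 1 := pow_le_pow_of_le_one (le_of_lt hq0) (le_of_lt hq1) (by omega)
      _ = q := pow_one q
      _ < 1 := hq1
    unfold qnum
    apply div_ne_zero _ hq1'
    nlinarith
  have hrel : qnum q (m - 1) = (qnum q m - 1) / q := by
    unfold qnum
    field_simp
    have : q * q ^ (m - 1) = q ^ m := by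
      rw [← pow_succ']
      congr 1
      omega
    ring_nf
    nlinarith [this]
  have ht : q ^ (m : ℤ) = 1 - (1 - q) * qnum q m := by
    unfold qnum
    rw [zpow_natCast]
    field_simp
    ring
  have hz1 : q ^ (2 * (m : ℤ)) = (q ^ (m : ℤ)) ^ 2 := by
    rw [← zpow_natCast (q ^ (m:ℤ)) 2, ← zpow_mul]
    ring_nf
  have hz2 : q ^ (2 * (m : ℤ) - (b + 1 : ℕ)) = (q ^ (m : ℤ)) ^ 2 / q ^ (b + 1) := by
    rw [zpow_sub₀ hq]
    simp only [hz1, zpow_natCast]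
  have hz3 : q ^ ((m : ℤ) - (b + 1 : ℕ) + 1) = q ^ (m : ℤ) * q / q ^ (b + 1) := by
    rw [show ((m:ℤ) - ((b+1:ℕ):ℤ) + 1) = (m:ℤ) + 1 - ((b+1:ℕ):ℤ) by ring,
      zpow_sub₀ hq, zpow_add₀ hq, zpow_one, zpow_natCast, zpow_natCast]
  simp only [Nat.add_sub_cancel, hz1, hz2, hz3, hrel, ht]
  have hA1 : qnum q m - 1 ≠ 0 := by
    intro h
    apply hB
    rw [hrel, h, zero_div]
  set A := qnum q m with hAdef
  have hD : A - θ * (1 - (1 - q) * A) ≠ 0 := by rw [← ht]; exact hden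
  field_simp
  simp only [div_pow]
  field_simp
  ring
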